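/- For any real x ≥ 4 and any δ ∈ (0, 1/e^9], we have (1 - 1/(3x))^{⌈(x/6)·log(1/δ)⌉} ≥ 4·δ^{1/3}. -/

import Mathlib

/-- For any real `x ≥ 4` and `δ ∈ (0, 1/e⁹]`,
`(1 - 1/(3x))^⌈(x/6)·log(1/δ)⌉ ≥ 4·δ^(1/3)`. -/
theorem geom_bound_delta_third (x δ : ℝ) (hx : 4 ≤ x)
    (hδ : δ ∈ Set.Ioc 0 (1 / Real.exp 9)) :
    4 * δ ^ ((1 : ℝ) / 3) ≤ (1 - 1 / (3 * x)) ^ ⌈x / 6 * Real.log (1 / δ)⌉₊ := by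
  obtain ⟨hδ0, hδ1⟩ := hδ
  have hx0 : (0:ℝ) < x := by linarith
  set L := Real.log (1 / δ) with hLdef
  have hL9 : 9 ≤ L := by
    have h1 : Real.exp 9 ≤ 1 / δ := by
      rw [le_div_iff₀ hδ0]
      have := mul_le_mul_of_nonneg_left hδ1 (Real.exp_pos 9).le
      calc Real.exp 9 * δ ≤ Real.exp 9 * (1 / Real.exp 9) := this
        _ = 1 := by field_simp
    calc (9:ℝ) = Real.log (Real.exp 9) := (Real.log_exp 9).symm
      _ ≤ L := Real.log_le_log (Real.exp_pos 9) h1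
  set n : ℕ := ⌈x / 6 * L⌉₊ with hndef
  have hLnn : 0 ≤ x / 6 * L := by positivity
  have hnle : (n:ℝ) ≤ x / 6 * L + 1 := (Nat.ceil_lt_add_one hLnn).le
  -- base bound: exp(-4/(11x)) ≤ 1 - 1/(3x)
  have hb : Real.exp (-(4 / (11 * x))) ≤ 1 - 1 / (3 * x) := by
    have h1 : 1 + 4 / (11 * x) ≤ Real.exp (4 / (11 * x)) := by
      linarith [Real.add_one_le_exp (4 / (11 * x))]
    have hpos : (0:ℝ) < 1 + 4 / (11 * x) := by positivity
    have h2 : Real.exp (-(4 / (11 * x))) ≤ (1 + 4 / (11 * x))⁻¹ := by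
      rw [Real.exp_neg]
      exact inv_anti₀ hpos h1
    have h3 : (1 + 4 / (11 * x))⁻¹ ≤ 1 - 1 / (3 * x) := by
      rw [inv_le_iff_one_le_mul₀ hpos]
      have hx3 : (0:ℝ) < 3 * x := by linarith
      have hx11 : (0:ℝ) < 11 * x := by linarith
      field_simp
      nlinarith
    linarith
  have hbpos : (0:ℝ) < 1 - 1 / (3 * x) := lt_of_lt_of_le (Real.exp_pos _) hb
  -- power bound
  have hpow : Real.exp ((n:ℝ) * (-(4 / (11 * x)))) ≤ (1 - 1 / (3 * x)) ^ n := by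
    rw [Real.exp_nat_mul]
    exact pow_le_pow_left₀ (Real.exp_pos _).le hb n
  -- exponent inequality
  have hkey : 2 - L / 3 ≤ (n:ℝ) * (-(4 / (11 * x))) := by
    have h4 : 4 * (n:ℝ) ≤ (2 * L / 33 + 1 / 11) * (11 * x) := by
      nlinarith
    have h5 : (n:ℝ) * (4 / (11 * x)) ≤ 2 * L / 33 + 1 / 11 := by
      rw [mul_div_assoc', div_le_iff₀ (by positivity)]
      linarith
    nlinarith
  -- left side bound
  have hδpow : δ ^ ((1:ℝ)/3) = Real.exp (-(L / 3)) := by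
    rw [Real.rpow_def_of_pos hδ0]
    congr 1
    have : L = - Real.log δ := by rw [hLdef, Real.log_div one_ne_zero (ne_of_gt hδ0), Real.log_one]; ring
    rw [this]; ring
  have h4le : (4:ℝ) ≤ Real.exp 2 := by
    have h := Real.add_one_le_exp (1:ℝ)
    have : Real.exp 2 = Real.exp 1 * Real.exp 1 := by
      rw [← Real.exp_add]; norm_num
    nlinarith [Real.exp_pos (1:ℝ)]
  calc 4 * δ ^ ((1:ℝ)/3) = 4 * Real.exp (-(L/3)) := by rw [hδpow]
    _ ≤ Real.exp 2 * Real.exp (-(L/3)) := by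
        have := Real.exp_pos (-(L/3))
        nlinarith
    _ = Real.exp (2 - L/3) := by rw [← Real.exp_add]; ring_nf
    _ ≤ Real.exp ((n:ℝ) * (-(4 / (11 * x)))) := Real.exp_le_exp.mpr hkey
    _ ≤ (1 - 1 / (3 * x)) ^ n := hpow
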